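/- min over N-th roots of unity ξ of |1 − ξ e^{iΩ/N}|² equals |1 − e^{iδ/N}|² where δ = dist(Ω, 2πℤ) = inf_{k∈ℤ}|Ω − 2πk|. -/

import Mathlib

open Complex

lemma norm_one_sub_exp_sq (x : ℝ) :
    ‖1 - Complex.exp (Complex.I * x)‖ ^ 2 = 2 - 2 * Real.cos x := by
  have h : (1 : ℂ) - Complex.exp (Complex.I * x)
      = Complex.ofReal (1 - Real.cos x) - Complex.ofReal (Real.sin x) * Complex.I := by
    rw [mul_comm, Complex.exp_mul_I]; push_cast; ring
  rw [h, Complex.sq_norm, Complex.normSq_apply]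
  simp only [Complex.sub_re, Complex.sub_im, Complex.mul_re, Complex.mul_im,
    Complex.ofReal_re, Complex.ofReal_im, Complex.I_re, Complex.I_im]
  nlinarith [Real.sin_sq_add_cos_sq x]

/-- min over N-th roots of unity ξ of |1 − ξe^{iΩ/N}|² equals |1 − e^{iδ/N}|²,
where δ = dist(Ω, 2πℤ). -/
theorem stmt9 (N : ℕ) (hN : 1 ≤ N) (Ω δ : ℝ)
    (hδ : IsLeast {d : ℝ | ∃ k : ℤ, d = |Ω - 2 * Real.pi * k|} δ) :
    IsLeast {r : ℝ | ∃ ξ : ℂ, ξ ^ N = 1 ∧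
        r = ‖1 - ξ * Complex.exp (Complex.I * (Ω / N))‖^2}
      (‖1 - Complex.exp (Complex.I * (δ / N))‖^2) := by
  obtain ⟨⟨k₀, hk₀⟩, hlb⟩ := hδ
  have hNR : (0:ℝ) < N := by exact_mod_cast hN
  have hNC : (N:ℂ) ≠ 0 := by exact_mod_cast hNR.ne'
  have hδ0 : 0 ≤ δ := hk₀ ▸ abs_nonneg _
  have hrhs : Complex.I * ((δ:ℂ)/(N:ℂ)) = Complex.I * (((δ/N : ℝ)) : ℂ) := by push_cast; ring
  constructor
  · refine ⟨Complex.exp (Complex.I * (((-(2*Real.pi*k₀)/N) : ℝ) : ℂ)), ?_, ?_⟩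
    · rw [← Complex.exp_nat_mul]
      have h : (N:ℂ) * (Complex.I * (((-(2*Real.pi*k₀)/N) : ℝ) : ℂ)) =
          ((-k₀ : ℤ) : ℂ) * (2 * (Real.pi:ℂ) * Complex.I) := by
        push_cast; field_simp
      rw [h, Complex.exp_int_mul_two_pi_mul_I]
    · rw [← Complex.exp_add]
      have harg : Complex.I * (((-(2*Real.pi*k₀)/N) : ℝ) : ℂ) + Complex.I * ((Ω:ℂ)/(N:ℂ))
          = Complex.I * (((Ω - 2*Real.pi*k₀)/N : ℝ) : ℂ) := by push_cast; field_simp; ring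
      rw [harg, hrhs, norm_one_sub_exp_sq, norm_one_sub_exp_sq]
      have hc : δ/N = |(Ω - 2*Real.pi*k₀)/N| := by
        rw [hk₀, abs_div, abs_of_pos hNR]
      rw [hc, Real.cos_abs]
  · rintro r ⟨ξ, hξ, rfl⟩
    have hz1 : ‖(ξ * Complex.exp (Complex.I * ((Ω:ℂ)/(N:ℂ))))‖ = 1 := by
      have h1 : ‖ξ‖ = 1 := by
        have h : ‖ξ‖ ^ N = 1 := by rw [← norm_pow, hξ, norm_one]
        rcases pow_eq_one_iff_cases.mp h with h' | h' | h'
        · omega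
        · exact h'
        · exfalso; have := norm_nonneg ξ; rw [h'.1] at this; linarith
      rw [norm_mul, h1, one_mul, Complex.norm_exp]
      simp
    set z := ξ * Complex.exp (Complex.I * ((Ω:ℂ)/(N:ℂ))) with hzdef
    set θ := Complex.arg z with hθ
    have hzexp : z = Complex.exp ((θ:ℂ) * Complex.I) := by
      conv_lhs => rw [← Complex.norm_mul_exp_arg_mul_I z]
      rw [hz1]; simp; rfl
    have hzN : Complex.exp ((N:ℂ) * ((θ:ℂ) * Complex.I)) = Complex.exp (Complex.I * (Ω:ℂ)) := by
      rw [Complex.exp_nat_mul, ← hzexp]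
      rw [hzdef, mul_pow, hξ, one_mul, ← Complex.exp_nat_mul]
      congr 1
      field_simp
    obtain ⟨n, hn⟩ := Complex.exp_eq_exp_iff_exists_int.mp hzN
    have hre : (N:ℝ) * θ = Ω + n * (2*Real.pi) := by
      have := congrArg Complex.im hn
      simpa using this
    have hδle : δ ≤ (N:ℝ) * |θ| := by
      calc δ ≤ |Ω - 2*Real.pi*((-n : ℤ):ℝ)| := hlb ⟨-n, rfl⟩
        _ = |(N:ℝ)*θ| := by congr 1; push_cast; linarith [hre]
        _ ≤ (N:ℝ) * |θ| := by rw [abs_mul, abs_of_pos hNR]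
    rw [hzexp, mul_comm ((θ:ℂ)) Complex.I, hrhs]
    rw [norm_one_sub_exp_sq, norm_one_sub_exp_sq]
    have hcos : Real.cos θ ≤ Real.cos (δ/N) := by
      rw [← Real.cos_abs θ]
      apply Real.cos_le_cos_of_nonneg_of_le_pi (by positivity) (Complex.abs_arg_le_pi z)
      rw [div_le_iff₀ hNR]
      linarith [hδle]
    linarith
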